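/- Under unique solvability of the Neumann problem on [0,T], the Dirichlet problem on [0,T], and the periodic problem on [0,2T] with even-extended potential ã, the Green's functions satisfy G_N(t,s) + G_D(t,s) = 2·G_P(t,s) and G_N(t,s) − G_D(t,s) = 2·G_P(2T−t, s) for all (t,s) ∈ [0,T]×[0,T]. -/

import Mathlib

open Set MeasureTheory intervalIntegral

noncomputable def evenExt (T : ℝ) (f : ℝ → ℝ) : ℝ → ℝ :=
  fun t => if t ≤ T then f t else f (2 * T - t)

noncomputable def oddExt (T : ℝ) (f : ℝ → ℝ) : ℝ → ℝ :=
  fun t => if t ≤ T then f t else -f (2 * T - t)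

/-- `u` is a Carathéodory (W^{2,1}) solution of `u'' + a u = σ` on `[0, L]`:
`u` is `C¹` with derivative `u'`, and `u'` is absolutely continuous, being the
indefinite integral of `σ - a u` (so `u'' + a u = σ` a.e.). -/
def IsSolIcc (a σ : ℝ → ℝ) (L : ℝ) (u u' : ℝ → ℝ) : Prop :=
  (∀ t ∈ Icc (0:ℝ) L, HasDerivAt u (u' t) t) ∧
  (∀ t ∈ Icc (0:ℝ) L, u' t = u' 0 + ∫ s in (0:ℝ)..t, (σ s - a s * u s))

def PeriodicBC (L : ℝ) : (ℝ → ℝ) → (ℝ → ℝ) → Prop :=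
  fun u u' => u 0 = u L ∧ u' 0 = u' L

def AntiperiodicBC (L : ℝ) : (ℝ → ℝ) → (ℝ → ℝ) → Prop :=
  fun u u' => u 0 = -u L ∧ u' 0 = -u' L

def NeumannBC (L : ℝ) : (ℝ → ℝ) → (ℝ → ℝ) → Prop :=
  fun _ u' => u' 0 = 0 ∧ u' L = 0

def DirichletBC (L : ℝ) : (ℝ → ℝ) → (ℝ → ℝ) → Prop :=
  fun u _ => u 0 = 0 ∧ u L = 0

def Mixed1BC (L : ℝ) : (ℝ → ℝ) → (ℝ → ℝ) → Prop :=
  fun u u' => u' 0 = 0 ∧ u L = 0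

def Mixed2BC (L : ℝ) : (ℝ → ℝ) → (ℝ → ℝ) → Prop :=
  fun u u' => u 0 = 0 ∧ u' L = 0

/-- `G` is the Green's function of `u'' + a u = σ` on `[0, L]` with the boundary
conditions `BC`: for every integrable right-hand side `σ`, the function
`t ↦ ∫₀^L G(t,s) σ(s) ds` is a solution of the boundary value problem, and the
solution is unique (on `[0,L]`). -/
def IsGreen (a : ℝ → ℝ) (L : ℝ)
    (BC : (ℝ → ℝ) → (ℝ → ℝ) → Prop) (G : ℝ → ℝ → ℝ) : Prop :=
  ∀ σ : ℝ → ℝ, IntervalIntegrable σ volume 0 L →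
    (∃ w', IsSolIcc a σ L (fun t => ∫ s in (0:ℝ)..L, G t s * σ s) w' ∧
        BC (fun t => ∫ s in (0:ℝ)..L, G t s * σ s) w') ∧
    (∀ u₁ u₁' u₂ u₂', IsSolIcc a σ L u₁ u₁' → BC u₁ u₁' →
        IsSolIcc a σ L u₂ u₂' → BC u₂ u₂' → ∀ t ∈ Icc (0:ℝ) L, u₁ t = u₂ t)

/-- `lam` is an eigenvalue of `u'' + (a + lam) u = 0` on `[0, L]` with boundary
conditions `BC`: there is a nontrivial W^{2,1} solution. -/
def IsEigen (a : ℝ → ℝ) (L : ℝ)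
    (BC : (ℝ → ℝ) → (ℝ → ℝ) → Prop) (lam : ℝ) : Prop :=
  ∃ u u' : ℝ → ℝ, IsSolIcc (fun t => a t + lam) (fun _ => 0) L u u' ∧ BC u u' ∧
    ∃ t ∈ Icc (0:ℝ) L, u t ≠ 0

lemma evenExt_of_le (T : ℝ) (f : ℝ → ℝ) {s : ℝ} (hs : s ≤ T) : evenExt T f s = f s := if_pos hs

lemma evenExt_refl (T : ℝ) (f : ℝ → ℝ) {s : ℝ} (hs : s ≤ T) : evenExt T f (2*T - s) = f s := by
  unfold evenExt
  rcases eq_or_lt_of_le hs with h | h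
  · rw [show 2*T - s = T by rw [h]; ring, if_pos le_rfl, h]
  · rw [if_neg (by linarith), show 2*T - (2*T - s) = s by ring]

lemma oddExt_of_le (T : ℝ) (f : ℝ → ℝ) {s : ℝ} (hs : s ≤ T) : oddExt T f s = f s := if_pos hs

lemma oddExt_refl (T : ℝ) (f : ℝ → ℝ) {s : ℝ} (hs : s < T) : oddExt T f (2*T - s) = -f s := by
  unfold oddExt
  rw [if_neg (by linarith), show 2*T - (2*T - s) = s by ring]

lemma evenExt_integrable {T : ℝ} (hT : 0 ≤ T) {f : ℝ → ℝ}
    (hf : IntervalIntegrable f volume 0 T) :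
    IntervalIntegrable (evenExt T f) volume 0 (2*T) := by
  have h1 : IntervalIntegrable (evenExt T f) volume 0 T := by
    apply hf.congr
    intro s hs
    rw [uIoc_of_le hT] at hs
    exact (evenExt_of_le T f hs.2).symm
  have h2 : IntervalIntegrable (evenExt T f) volume T (2*T) := by
    have := hf.comp_sub_left (2*T)
    rw [show 2*T - 0 = 2*T by ring, show 2*T - T = T by ring] at this
    apply this.symm.congr
    intro s hs
    rw [uIoc_of_le (by linarith : T ≤ 2*T)] at hs
    have h2 : 2*T - s ≤ T := by linarith [hs.1]
    have h3 := evenExt_refl T f h2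
    rw [show 2*T - (2*T - s) = s by ring] at h3
    exact h3.symm
  exact h1.trans h2

lemma oddExt_integrable {T : ℝ} (hT : 0 ≤ T) {f : ℝ → ℝ}
    (hf : IntervalIntegrable f volume 0 T) :
    IntervalIntegrable (oddExt T f) volume 0 (2*T) := by
  have h1 : IntervalIntegrable (oddExt T f) volume 0 T := by
    apply hf.congr
    intro s hs
    rw [uIoc_of_le hT] at hs
    exact (oddExt_of_le T f hs.2).symm
  have h2 : IntervalIntegrable (oddExt T f) volume T (2*T) := by
    have := (hf.neg.comp_sub_left (2*T))
    rw [show 2*T - 0 = 2*T by ring, show 2*T - T = T by ring] at this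
    apply this.symm.congr
    intro s hs
    rw [uIoc_of_le (by linarith : T ≤ 2*T)] at hs
    have hlt : 2*T - s < T := by linarith [hs.1]
    have h3 := oddExt_refl T f hlt
    rw [show 2*T - (2*T - s) = s by ring] at h3
    simp only [Pi.neg_apply]
    rw [h3]
  exact h1.trans h2

lemma sol_continuousOn {a σ : ℝ → ℝ} {L : ℝ} {u u' : ℝ → ℝ}
    (h : IsSolIcc a σ L u u') : ContinuousOn u (Icc 0 L) :=
  fun t ht => ((h.1 t ht).continuousAt).continuousWithinAt

lemma integrand_int {a σ u : ℝ → ℝ} {L : ℝ} (hL : 0 ≤ L)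
    (hσ : IntervalIntegrable σ volume 0 L) (ha : IntervalIntegrable a volume 0 L)
    (hu : ContinuousOn u (Icc 0 L)) :
    IntervalIntegrable (fun s => σ s - a s * u s) volume 0 L :=
  hσ.sub (ha.mul_continuousOn (by rwa [uIcc_of_le hL]))

/-- restriction of a solution on `[0,2T]` to `[0,T]`. -/
lemma sol_restrict {A Sg a σ : ℝ → ℝ} {T : ℝ} (hT : 0 ≤ T) {v v' : ℝ → ℝ}
    (h : IsSolIcc A Sg (2*T) v v')
    (hAa : ∀ s, 0 ≤ s → s ≤ T → A s = a s)
    (hSs : ∀ᵐ s : ℝ, s ∈ Ioc (0:ℝ) T → Sg s = σ s) :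
    IsSolIcc a σ T v v' := by
  have hsub : ∀ t ∈ Icc (0:ℝ) T, t ∈ Icc (0:ℝ) (2*T) := by
    intro t ht; exact ⟨ht.1, by linarith [ht.2]⟩
  constructor
  · intro t ht; exact h.1 t (hsub t ht)
  · intro t ht
    rw [h.2 t (hsub t ht)]
    congr 1
    apply intervalIntegral.integral_congr_ae
    filter_upwards [hSs] with s hs hmem
    rw [uIoc_of_le ht.1] at hmem
    have hsT : s ∈ Ioc (0:ℝ) T := ⟨hmem.1, le_trans hmem.2 ht.2⟩
    rw [hs hsT, hAa s (le_of_lt hsT.1) hsT.2]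

/-- reflection of a solution on `[0,2T]` to a solution on `[0,T]`. -/
lemma sol_reflect {A Sg a σ : ℝ → ℝ} {T : ℝ} (hT : 0 ≤ T) {v v' : ℝ → ℝ}
    (h : IsSolIcc A Sg (2*T) v v')
    (hSint : IntervalIntegrable Sg volume 0 (2*T))
    (hAint : IntervalIntegrable A volume 0 (2*T))
    (hAa : ∀ s, 0 ≤ s → s ≤ T → A (2*T - s) = a s)
    (hSs : ∀ᵐ s : ℝ, s ∈ Ioc (0:ℝ) T → Sg (2*T - s) = σ s) :
    IsSolIcc a σ T (fun t => v (2*T - t)) (fun t => -v' (2*T - t)) := by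
  have hsub : ∀ t ∈ Icc (0:ℝ) T, 2*T - t ∈ Icc (0:ℝ) (2*T) := by
    intro t ht; exact ⟨by linarith [ht.2], by linarith [ht.1]⟩
  have hvc : ContinuousOn v (Icc 0 (2*T)) := sol_continuousOn h
  have hgint : IntervalIntegrable (fun s => Sg s - A s * v s) volume 0 (2*T) :=
    integrand_int (by linarith) hSint hAint hvc
  constructor
  · intro t ht
    have h1 : HasDerivAt v (v' (2*T - t)) (2*T - t) := h.1 _ (hsub t ht)
    have h2 : HasDerivAt (fun x : ℝ => 2*T - x) (-1) t := by
      simpa using (hasDerivAt_id t).const_sub (2*T)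
    have := h1.comp t h2
    simpa [Function.comp_def, mul_comm] using this
  · intro t ht
    have e1 := h.2 (2*T - t) (hsub t ht)
    have e2 := h.2 (2*T) ⟨by linarith, le_rfl⟩
    have hadj : (∫ s in (0:ℝ)..(2*T - t), (Sg s - A s * v s)) +
        (∫ s in (2*T - t)..(2*T), (Sg s - A s * v s)) =
        ∫ s in (0:ℝ)..(2*T), (Sg s - A s * v s) := by
      apply integral_add_adjacent_intervals
      · exact hgint.mono_set (by
          rw [uIcc_of_le (by linarith [ht.2] : (0:ℝ) ≤ 2*T - t),
            uIcc_of_le (by linarith : (0:ℝ) ≤ 2*T)]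
          exact Icc_subset_Icc le_rfl (by linarith [ht.1]))
      · exact hgint.mono_set (by
          rw [uIcc_of_le (by linarith [ht.1] : (2*T - t) ≤ 2*T),
            uIcc_of_le (by linarith : (0:ℝ) ≤ 2*T)]
          exact Icc_subset_Icc (by linarith [ht.2]) le_rfl)
    have key : -v' (2*T - t) = -v' (2*T) + ∫ s in (2*T - t)..(2*T), (Sg s - A s * v s) := by
      rw [e1, e2]; linarith [hadj]
    show -v' (2*T - t) = -v' (2*T - 0) + ∫ s in (0:ℝ)..t, (σ s - a s * v (2*T - s))
    rw [show (2*T - 0 : ℝ) = 2*T by ring, key]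
    congr 1
    have hcv : (∫ s in (2*T - t)..(2*T), (Sg s - A s * v s)) =
        ∫ s in (0:ℝ)..t, (Sg (2*T - s) - A (2*T - s) * v (2*T - s)) := by
      rw [integral_comp_sub_left (fun s => Sg s - A s * v s) (2*T)]
      norm_num
    rw [hcv]
    apply intervalIntegral.integral_congr_ae
    filter_upwards [hSs] with s hs hmem
    rw [uIoc_of_le ht.1] at hmem
    have hsT : s ∈ Ioc (0:ℝ) T := ⟨hmem.1, le_trans hmem.2 ht.2⟩
    rw [hs hsT, hAa s (le_of_lt hsT.1) hsT.2]

lemma sol_add {a σ₁ σ₂ : ℝ → ℝ} {L : ℝ} (hL : 0 ≤ L) {u₁ u₁' u₂ u₂' : ℝ → ℝ}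
    (h₁ : IsSolIcc a σ₁ L u₁ u₁') (h₂ : IsSolIcc a σ₂ L u₂ u₂')
    (hσ₁ : IntervalIntegrable σ₁ volume 0 L) (hσ₂ : IntervalIntegrable σ₂ volume 0 L)
    (ha : IntervalIntegrable a volume 0 L) :
    IsSolIcc a (fun s => σ₁ s + σ₂ s) L (fun t => u₁ t + u₂ t) (fun t => u₁' t + u₂' t) := by
  have hi₁ : IntervalIntegrable (fun s => σ₁ s - a s * u₁ s) volume 0 L :=
    integrand_int hL hσ₁ ha (sol_continuousOn h₁)
  have hi₂ : IntervalIntegrable (fun s => σ₂ s - a s * u₂ s) volume 0 L :=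
    integrand_int hL hσ₂ ha (sol_continuousOn h₂)
  constructor
  · intro t ht; exact (h₁.1 t ht).add (h₂.1 t ht)
  · intro t ht
    have e : (∫ s in (0:ℝ)..t, ((σ₁ s + σ₂ s) - a s * (u₁ s + u₂ s))) =
        (∫ s in (0:ℝ)..t, (σ₁ s - a s * u₁ s)) + ∫ s in (0:ℝ)..t, (σ₂ s - a s * u₂ s) := by
      rw [← integral_add
        (hi₁.mono_set (by rw [uIcc_of_le ht.1, uIcc_of_le hL]; exact Icc_subset_Icc le_rfl ht.2))
        (hi₂.mono_set (by rw [uIcc_of_le ht.1, uIcc_of_le hL]; exact Icc_subset_Icc le_rfl ht.2))]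
      apply intervalIntegral.integral_congr
      intro s _; ring
    show u₁' t + u₂' t = u₁' 0 + u₂' 0 + _
    rw [e, h₁.2 t ht, h₂.2 t ht]; ring

lemma sol_sub {a σ₁ σ₂ : ℝ → ℝ} {L : ℝ} (hL : 0 ≤ L) {u₁ u₁' u₂ u₂' : ℝ → ℝ}
    (h₁ : IsSolIcc a σ₁ L u₁ u₁') (h₂ : IsSolIcc a σ₂ L u₂ u₂')
    (hσ₁ : IntervalIntegrable σ₁ volume 0 L) (hσ₂ : IntervalIntegrable σ₂ volume 0 L)
    (ha : IntervalIntegrable a volume 0 L) :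
    IsSolIcc a (fun s => σ₁ s - σ₂ s) L (fun t => u₁ t - u₂ t) (fun t => u₁' t - u₂' t) := by
  have hi₁ : IntervalIntegrable (fun s => σ₁ s - a s * u₁ s) volume 0 L :=
    integrand_int hL hσ₁ ha (sol_continuousOn h₁)
  have hi₂ : IntervalIntegrable (fun s => σ₂ s - a s * u₂ s) volume 0 L :=
    integrand_int hL hσ₂ ha (sol_continuousOn h₂)
  constructor
  · intro t ht; exact (h₁.1 t ht).sub (h₂.1 t ht)
  · intro t ht
    have e : (∫ s in (0:ℝ)..t, ((σ₁ s - σ₂ s) - a s * (u₁ s - u₂ s))) =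
        (∫ s in (0:ℝ)..t, (σ₁ s - a s * u₁ s)) - ∫ s in (0:ℝ)..t, (σ₂ s - a s * u₂ s) := by
      rw [← integral_sub
        (hi₁.mono_set (by rw [uIcc_of_le ht.1, uIcc_of_le hL]; exact Icc_subset_Icc le_rfl ht.2))
        (hi₂.mono_set (by rw [uIcc_of_le ht.1, uIcc_of_le hL]; exact Icc_subset_Icc le_rfl ht.2))]
      apply intervalIntegral.integral_congr
      intro s _; ring
    show u₁' t - u₂' t = u₁' 0 - u₂' 0 + _
    rw [e, h₁.2 t ht, h₂.2 t ht]; ring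

lemma sol_congr_rhs {a σ₁ σ₂ : ℝ → ℝ} {L : ℝ} {u u' : ℝ → ℝ}
    (h : IsSolIcc a σ₁ L u u') (hσ : ∀ s, σ₁ s = σ₂ s) : IsSolIcc a σ₂ L u u' := by
  have : σ₁ = σ₂ := funext hσ
  rwa [← this]

/-- splitting `∫₀^{2T} g·Sg` into reflected halves. -/
lemma split_integral {T : ℝ} (hT : 0 ≤ T) {g Sg σ : ℝ → ℝ} (c : ℝ)
    (hg : ContinuousOn g (Icc 0 (2*T)))
    (hSint : IntervalIntegrable Sg volume 0 (2*T))
    (h1 : ∀ᵐ s : ℝ, s ∈ Ioc (0:ℝ) T → Sg s = σ s)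
    (h2 : ∀ᵐ s : ℝ, s ∈ Ioc (0:ℝ) T → Sg (2*T - s) = c * σ s) :
    (∫ s in (0:ℝ)..(2*T), g s * Sg s) =
      (∫ s in (0:ℝ)..T, g s * σ s) + c * ∫ s in (0:ℝ)..T, g (2*T - s) * σ s := by
  have hgS : IntervalIntegrable (fun s => g s * Sg s) volume 0 (2*T) := by
    have := hSint.continuousOn_mul (by rwa [uIcc_of_le (by linarith : (0:ℝ) ≤ 2*T)])
    exact this
  have hmono1 : IntervalIntegrable (fun s => g s * Sg s) volume 0 T :=
    hgS.mono_set (by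
      rw [uIcc_of_le hT, uIcc_of_le (by linarith : (0:ℝ) ≤ 2*T)]
      exact Icc_subset_Icc le_rfl (by linarith))
  have hmono2 : IntervalIntegrable (fun s => g s * Sg s) volume T (2*T) :=
    hgS.mono_set (by
      rw [uIcc_of_le (by linarith : T ≤ 2*T), uIcc_of_le (by linarith : (0:ℝ) ≤ 2*T)]
      exact Icc_subset_Icc hT le_rfl)
  have hadj := integral_add_adjacent_intervals hmono1 hmono2
  have e1 : (∫ s in (0:ℝ)..T, g s * Sg s) = ∫ s in (0:ℝ)..T, g s * σ s := by
    apply intervalIntegral.integral_congr_ae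
    filter_upwards [h1] with s hs hmem
    rw [uIoc_of_le hT] at hmem
    rw [hs hmem]
  have e2 : (∫ s in T..(2*T), g s * Sg s) = c * ∫ s in (0:ℝ)..T, g (2*T - s) * σ s := by
    have hcv : (∫ s in T..(2*T), g s * Sg s) =
        ∫ s in (0:ℝ)..T, g (2*T - s) * Sg (2*T - s) := by
      rw [integral_comp_sub_left (fun s => g s * Sg s) (2*T)]
      norm_num
      rw [show (2*T - T : ℝ) = T by ring]
    rw [hcv, ← intervalIntegral.integral_const_mul]
    apply intervalIntegral.integral_congr_ae
    filter_upwards [h2] with s hs hmem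
    rw [uIoc_of_le hT] at hmem
    rw [hs hmem]; ring
  rw [← hadj, e1, e2]

/-- fundamental lemma: a continuous function with vanishing self-pairing vanishes. -/
lemma fund_lemma {T : ℝ} (hT : 0 < T) {F : ℝ → ℝ} (hF : ContinuousOn F (Icc 0 T))
    (h : (∫ s in (0:ℝ)..T, F s * F s) = 0) : ∀ s ∈ Icc (0:ℝ) T, F s = 0 := by
  have hFF : ContinuousOn (fun s => F s * F s) (Icc 0 T) := hF.mul hF
  have hFint : IntervalIntegrable (fun s => F s * F s) volume 0 T :=
    (hFF.mono (by rw [uIcc_of_le hT.le])).intervalIntegrable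
  have hnn : (0 : ℝ → ℝ) ≤ᵐ[volume.restrict (Ioc 0 T)] fun s => F s * F s :=
    Filter.Eventually.of_forall (fun s => mul_self_nonneg (F s))
  have hae := (integral_eq_zero_iff_of_le_of_nonneg_ae hT.le hnn hFint).1 h
  rw [Measure.restrict_congr_set Ioc_ae_eq_Icc] at hae
  have := Measure.eqOn_Icc_of_ae_eq (μ := volume) hT.ne hae hFF continuousOn_const
  intro s hs
  have := this hs
  simpa [mul_self_eq_zero] using this

lemma cont_slice {G : ℝ → ℝ → ℝ} {a b t : ℝ}
    (hc : ContinuousOn (fun p : ℝ × ℝ => G p.1 p.2) (Icc a b ×ˢ Icc a b))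
    (ht : t ∈ Icc a b) : ContinuousOn (fun s => G t s) (Icc a b) :=
  hc.comp ((Continuous.prodMk_right t).continuousOn) (fun s hs => mk_mem_prod ht hs)

lemma ae_ne_real (T : ℝ) : ∀ᵐ s : ℝ, s ≠ T := by
  refine mem_ae_iff.2 ?_
  have : {s : ℝ | s ≠ T}ᶜ = {T} := by ext x; simp
  rw [this]; exact measure_singleton T

lemma key_identities (T : ℝ) (hT : 0 < T) (a : ℝ → ℝ) (GN GD GP : ℝ → ℝ → ℝ)
    (ha : IntervalIntegrable a volume 0 T)
    (hcP : ContinuousOn (fun p : ℝ × ℝ => GP p.1 p.2)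
      (Icc (0:ℝ) (2 * T) ×ˢ Icc (0:ℝ) (2 * T)))
    (hGN : IsGreen a T (NeumannBC T) GN)
    (hGD : IsGreen a T (DirichletBC T) GD)
    (hGP : IsGreen (evenExt T a) (2 * T) (PeriodicBC (2 * T)) GP)
    (t : ℝ) (ht : t ∈ Icc (0:ℝ) T) (σ : ℝ → ℝ)
    (hσ : IntervalIntegrable σ volume 0 T) :
    (∫ s in (0:ℝ)..T, GN t s * σ s) + (∫ s in (0:ℝ)..T, GD t s * σ s) =
      2 * (∫ s in (0:ℝ)..T, GP t s * σ s) ∧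
    (∫ s in (0:ℝ)..T, GN t s * σ s) - (∫ s in (0:ℝ)..T, GD t s * σ s) =
      2 * (∫ s in (0:ℝ)..T, GP (2*T - t) s * σ s) := by
  have hT2 : (0:ℝ) ≤ 2*T := by linarith
  have haE : IntervalIntegrable (evenExt T a) volume 0 (2*T) := evenExt_integrable hT.le ha
  have hA1 : ∀ s, 0 ≤ s → s ≤ T → evenExt T a s = a s := fun s _ h => evenExt_of_le T a h
  have hA2 : ∀ s, 0 ≤ s → s ≤ T → evenExt T a (2*T - s) = a s := fun s _ h => evenExt_refl T a h
  have htP : t ∈ Icc (0:ℝ) (2*T) := ⟨ht.1, by linarith [ht.2]⟩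
  have htP' : 2*T - t ∈ Icc (0:ℝ) (2*T) := ⟨by linarith [ht.2], by linarith [ht.1]⟩
  have hg : ContinuousOn (fun s => GP t s) (Icc 0 (2*T)) := cont_slice hcP htP
  have hg' : ContinuousOn (fun s => GP (2*T - t) s) (Icc 0 (2*T)) := cont_slice hcP htP'
  set σ₂ : ℝ → ℝ := fun s => σ s + σ s with hσ₂def
  have hσ₂ : IntervalIntegrable σ₂ volume 0 T := hσ.add hσ
  have hz : IntervalIntegrable (fun _ : ℝ => (0:ℝ)) volume 0 T := intervalIntegrable_const
  have double : ∀ (G : ℝ → ℝ → ℝ) (t' : ℝ),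
      (∫ s in (0:ℝ)..T, G t' s * σ₂ s) = 2 * ∫ s in (0:ℝ)..T, G t' s * σ s := by
    intro G t'
    rw [← intervalIntegral.integral_const_mul]
    exact intervalIntegral.integral_congr (fun s _ => by ring)
  -- ============ EVEN CASE ============
  have hSe : IntervalIntegrable (evenExt T σ) volume 0 (2*T) := evenExt_integrable hT.le hσ
  obtain ⟨hex, huniqP⟩ := hGP (evenExt T σ) hSe
  obtain ⟨v', hv, hbc⟩ := hex
  set v : ℝ → ℝ := fun t' => ∫ s in (0:ℝ)..(2*T), GP t' s * evenExt T σ s with hvdef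
  have hS1 : ∀ᵐ s : ℝ, s ∈ Ioc (0:ℝ) T → evenExt T σ s = σ s :=
    Filter.Eventually.of_forall (fun s hs => evenExt_of_le T σ hs.2)
  have hS2 : ∀ᵐ s : ℝ, s ∈ Ioc (0:ℝ) T → evenExt T σ (2*T - s) = σ s :=
    Filter.Eventually.of_forall (fun s hs => evenExt_refl T σ hs.2)
  have hS2' : ∀ᵐ s : ℝ, s ∈ Ioc (0:ℝ) T → evenExt T σ (2*T - s) = 1 * σ s := by
    filter_upwards [hS2] with s h hs; rw [h hs]; ring
  have hres : IsSolIcc a σ T v v' := sol_restrict hT.le hv hA1 hS1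
  have hrefl : IsSolIcc a σ T (fun t' => v (2*T - t')) (fun t' => -v' (2*T - t')) :=
    sol_reflect hT.le hv hSe haE hA2 hS2
  have hper0 : v 0 = v (2*T) := hbc.1
  have hper1 : v' 0 = v' (2*T) := hbc.2
  -- Neumann problem for σ₂
  have hNsum : IsSolIcc a σ₂ T (fun t' => v t' + v (2*T - t'))
      (fun t' => v' t' + -v' (2*T - t')) := sol_add hT.le hres hrefl hσ hσ ha
  have hNbc : NeumannBC T (fun t' => v t' + v (2*T - t'))
      (fun t' => v' t' + -v' (2*T - t')) := by
    constructor
    · show v' 0 + -v' (2*T - 0) = 0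
      rw [show (2*T - 0 : ℝ) = 2*T by ring, hper1]; ring
    · show v' T + -v' (2*T - T) = 0
      rw [show (2*T - T : ℝ) = T by ring]; ring
  obtain ⟨hexN, huniqN⟩ := hGN σ₂ hσ₂
  obtain ⟨wN', hwN, hwNbc⟩ := hexN
  have eqN : ∀ t' ∈ Icc (0:ℝ) T,
      v t' + v (2*T - t') = ∫ s in (0:ℝ)..T, GN t' s * σ₂ s :=
    huniqN _ _ _ _ hNsum hNbc hwN hwNbc
  -- Dirichlet problem for 0
  have hDdiff0 : IsSolIcc a (fun s => σ s - σ s) T (fun t' => v t' - v (2*T - t'))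
      (fun t' => v' t' - -v' (2*T - t')) := sol_sub hT.le hres hrefl hσ hσ ha
  have hDdiff : IsSolIcc a (fun _ => (0:ℝ)) T (fun t' => v t' - v (2*T - t'))
      (fun t' => v' t' - -v' (2*T - t')) := sol_congr_rhs hDdiff0 (fun s => by ring)
  have hDbc : DirichletBC T (fun t' => v t' - v (2*T - t'))
      (fun t' => v' t' - -v' (2*T - t')) := by
    constructor
    · show v 0 - v (2*T - 0) = 0
      rw [show (2*T - 0 : ℝ) = 2*T by ring, hper0]; ring
    · show v T - v (2*T - T) = 0
      rw [show (2*T - T : ℝ) = T by ring]; ring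
  obtain ⟨hexD, huniqD⟩ := hGD (fun _ => (0:ℝ)) hz
  obtain ⟨wD', hwD, hwDbc⟩ := hexD
  have eqD : ∀ t' ∈ Icc (0:ℝ) T,
      v t' - v (2*T - t') = ∫ s in (0:ℝ)..T, GD t' s * (0:ℝ) :=
    huniqD _ _ _ _ hDdiff hDbc hwD hwDbc
  have veven : v (2*T - t) = v t := by
    have := eqD t ht
    simp at this
    linarith
  -- split the periodic integrals
  have vsplit : ∀ t' ∈ Icc (0:ℝ) (2*T), v t' =
      (∫ s in (0:ℝ)..T, GP t' s * σ s) + 1 * ∫ s in (0:ℝ)..T, GP t' (2*T - s) * σ s := by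
    intro t' ht'
    exact split_integral hT.le 1 (cont_slice hcP ht') hSe hS1 hS2'
  have I1 : (∫ s in (0:ℝ)..T, GN t s * σ s) =
      (∫ s in (0:ℝ)..T, GP t s * σ s) + ∫ s in (0:ℝ)..T, GP t (2*T - s) * σ s := by
    have h1 := eqN t ht
    rw [double GN t] at h1
    rw [veven, vsplit t htP] at h1
    linarith
  have K12 : (∫ s in (0:ℝ)..T, GP (2*T - t) s * σ s)
      + (∫ s in (0:ℝ)..T, GP (2*T - t) (2*T - s) * σ s) =
      (∫ s in (0:ℝ)..T, GP t s * σ s) + ∫ s in (0:ℝ)..T, GP t (2*T - s) * σ s := by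
    have h1 := vsplit t htP
    have h2 := vsplit (2*T - t) htP'
    rw [veven] at h2
    rw [h1] at h2
    linarith
  -- ============ ODD CASE ============
  have hSo : IntervalIntegrable (oddExt T σ) volume 0 (2*T) := oddExt_integrable hT.le hσ
  obtain ⟨hex₂, huniqP₂⟩ := hGP (oddExt T σ) hSo
  obtain ⟨v₂', hv₂, hbc₂⟩ := hex₂
  set v₂ : ℝ → ℝ := fun t' => ∫ s in (0:ℝ)..(2*T), GP t' s * oddExt T σ s with hv₂def
  have hO1 : ∀ᵐ s : ℝ, s ∈ Ioc (0:ℝ) T → oddExt T σ s = σ s :=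
    Filter.Eventually.of_forall (fun s hs => oddExt_of_le T σ hs.2)
  have hO2 : ∀ᵐ s : ℝ, s ∈ Ioc (0:ℝ) T → oddExt T σ (2*T - s) = -σ s := by
    filter_upwards [ae_ne_real T] with s hsne hs
    exact oddExt_refl T σ (lt_of_le_of_ne hs.2 hsne)
  have hO2' : ∀ᵐ s : ℝ, s ∈ Ioc (0:ℝ) T → oddExt T σ (2*T - s) = (-1) * σ s := by
    filter_upwards [hO2] with s h hs; rw [h hs]; ring
  have hres₂ : IsSolIcc a σ T v₂ v₂' := sol_restrict hT.le hv₂ hA1 hO1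
  have hrefl₂ : IsSolIcc a (fun s => -σ s) T (fun t' => v₂ (2*T - t'))
      (fun t' => -v₂' (2*T - t')) := sol_reflect hT.le hv₂ hSo haE hA2 hO2
  have hper0₂ : v₂ 0 = v₂ (2*T) := hbc₂.1
  have hper1₂ : v₂' 0 = v₂' (2*T) := hbc₂.2
  -- Dirichlet problem for σ₂
  have hDsum0 : IsSolIcc a (fun s => σ s - -σ s) T (fun t' => v₂ t' - v₂ (2*T - t'))
      (fun t' => v₂' t' - -v₂' (2*T - t')) := sol_sub hT.le hres₂ hrefl₂ hσ hσ.neg ha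
  have hDsum : IsSolIcc a σ₂ T (fun t' => v₂ t' - v₂ (2*T - t'))
      (fun t' => v₂' t' - -v₂' (2*T - t')) := sol_congr_rhs hDsum0 (fun s => by show σ s - -σ s = σ s + σ s; ring)
  have hDbc₂ : DirichletBC T (fun t' => v₂ t' - v₂ (2*T - t'))
      (fun t' => v₂' t' - -v₂' (2*T - t')) := by
    constructor
    · show v₂ 0 - v₂ (2*T - 0) = 0
      rw [show (2*T - 0 : ℝ) = 2*T by ring, hper0₂]; ring
    · show v₂ T - v₂ (2*T - T) = 0
      rw [show (2*T - T : ℝ) = T by ring]; ring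
  obtain ⟨hexD₂, huniqD₂⟩ := hGD σ₂ hσ₂
  obtain ⟨wD₂', hwD₂, hwD₂bc⟩ := hexD₂
  have eqD₂ : ∀ t' ∈ Icc (0:ℝ) T,
      v₂ t' - v₂ (2*T - t') = ∫ s in (0:ℝ)..T, GD t' s * σ₂ s :=
    huniqD₂ _ _ _ _ hDsum hDbc₂ hwD₂ hwD₂bc
  -- Neumann problem for 0
  have hNdiff0 : IsSolIcc a (fun s => σ s + -σ s) T (fun t' => v₂ t' + v₂ (2*T - t'))
      (fun t' => v₂' t' + -v₂' (2*T - t')) := sol_add hT.le hres₂ hrefl₂ hσ hσ.neg ha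
  have hNdiff : IsSolIcc a (fun _ => (0:ℝ)) T (fun t' => v₂ t' + v₂ (2*T - t'))
      (fun t' => v₂' t' + -v₂' (2*T - t')) := sol_congr_rhs hNdiff0 (fun s => by ring)
  have hNbc₂ : NeumannBC T (fun t' => v₂ t' + v₂ (2*T - t'))
      (fun t' => v₂' t' + -v₂' (2*T - t')) := by
    constructor
    · show v₂' 0 + -v₂' (2*T - 0) = 0
      rw [show (2*T - 0 : ℝ) = 2*T by ring, hper1₂]; ring
    · show v₂' T + -v₂' (2*T - T) = 0
      rw [show (2*T - T : ℝ) = T by ring]; ring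
  obtain ⟨hexN₂, huniqN₂⟩ := hGN (fun _ => (0:ℝ)) hz
  obtain ⟨wN₂', hwN₂, hwN₂bc⟩ := hexN₂
  have eqN₂ : ∀ t' ∈ Icc (0:ℝ) T,
      v₂ t' + v₂ (2*T - t') = ∫ s in (0:ℝ)..T, GN t' s * (0:ℝ) :=
    huniqN₂ _ _ _ _ hNdiff hNbc₂ hwN₂ hwN₂bc
  have vodd : v₂ (2*T - t) = -v₂ t := by
    have := eqN₂ t ht
    simp at this
    linarith
  have vsplit₂ : ∀ t' ∈ Icc (0:ℝ) (2*T), v₂ t' =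
      (∫ s in (0:ℝ)..T, GP t' s * σ s) + (-1) * ∫ s in (0:ℝ)..T, GP t' (2*T - s) * σ s := by
    intro t' ht'
    exact split_integral hT.le (-1) (cont_slice hcP ht') hSo hO1 hO2'
  have I2 : (∫ s in (0:ℝ)..T, GD t s * σ s) =
      (∫ s in (0:ℝ)..T, GP t s * σ s) - ∫ s in (0:ℝ)..T, GP t (2*T - s) * σ s := by
    have h1 := eqD₂ t ht
    rw [double GD t] at h1
    rw [vodd, vsplit₂ t htP] at h1
    linarith
  have K12' : (∫ s in (0:ℝ)..T, GP (2*T - t) s * σ s)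
      - (∫ s in (0:ℝ)..T, GP (2*T - t) (2*T - s) * σ s) =
      -(∫ s in (0:ℝ)..T, GP t s * σ s) + ∫ s in (0:ℝ)..T, GP t (2*T - s) * σ s := by
    have h1 := vsplit₂ t htP
    have h2 := vsplit₂ (2*T - t) htP'
    rw [vodd] at h2
    rw [h1] at h2
    linarith
  constructor
  · rw [I1, I2]; linarith
  · rw [I1, I2]; linarith

theorem statement7' (T : ℝ) (hT : 0 < T) (a : ℝ → ℝ) (GN GD GP : ℝ → ℝ → ℝ)
    (ha : IntervalIntegrable a volume 0 T)
    (hcN : ContinuousOn (fun p : ℝ × ℝ => GN p.1 p.2) (Icc (0:ℝ) T ×ˢ Icc (0:ℝ) T))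
    (hcD : ContinuousOn (fun p : ℝ × ℝ => GD p.1 p.2) (Icc (0:ℝ) T ×ˢ Icc (0:ℝ) T))
    (hcP : ContinuousOn (fun p : ℝ × ℝ => GP p.1 p.2)
      (Icc (0:ℝ) (2 * T) ×ˢ Icc (0:ℝ) (2 * T)))
    (hGN : IsGreen a T (NeumannBC T) GN)
    (hGD : IsGreen a T (DirichletBC T) GD)
    (hGP : IsGreen (evenExt T a) (2 * T) (PeriodicBC (2 * T)) GP) :
    ∀ t ∈ Icc (0:ℝ) T, ∀ s ∈ Icc (0:ℝ) T,
      GN t s + GD t s = 2 * GP t s ∧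
      GN t s - GD t s = 2 * GP (2 * T - t) s := by
  intro t ht s hs
  have htP : t ∈ Icc (0:ℝ) (2*T) := ⟨ht.1, by linarith [ht.2]⟩
  have htP' : 2*T - t ∈ Icc (0:ℝ) (2*T) := ⟨by linarith [ht.2], by linarith [ht.1]⟩
  have hsubT : Icc (0:ℝ) T ⊆ Icc (0:ℝ) (2*T) := Icc_subset_Icc le_rfl (by linarith)
  have hgN : ContinuousOn (fun s => GN t s) (Icc (0:ℝ) T) := cont_slice hcN ht
  have hgD : ContinuousOn (fun s => GD t s) (Icc (0:ℝ) T) := cont_slice hcD ht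
  have hgP : ContinuousOn (fun s => GP t s) (Icc (0:ℝ) T) :=
    (cont_slice hcP htP).mono hsubT
  have hgP' : ContinuousOn (fun s => GP (2*T - t) s) (Icc (0:ℝ) T) :=
    (cont_slice hcP htP').mono hsubT
  -- first identity
  set F₁ : ℝ → ℝ := fun s => GN t s + GD t s - 2 * GP t s with hF₁def
  have hF₁c : ContinuousOn F₁ (Icc (0:ℝ) T) :=
    ((hgN.add hgD).sub (hgP.const_smul (2:ℝ)))
  have hF₁int : IntervalIntegrable F₁ volume 0 T :=
    (hF₁c.mono (by rw [uIcc_of_le hT.le])).intervalIntegrable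
  have i1 : IntervalIntegrable (fun s => GN t s * F₁ s) volume 0 T :=
    ((hgN.mul hF₁c).mono (by rw [uIcc_of_le hT.le])).intervalIntegrable
  have i2 : IntervalIntegrable (fun s => GD t s * F₁ s) volume 0 T :=
    ((hgD.mul hF₁c).mono (by rw [uIcc_of_le hT.le])).intervalIntegrable
  have i3 : IntervalIntegrable (fun s => GP t s * F₁ s) volume 0 T :=
    ((hgP.mul hF₁c).mono (by rw [uIcc_of_le hT.le])).intervalIntegrable
  have hkey₁ := key_identities T hT a GN GD GP ha hcP hGN hGD hGP t ht F₁ hF₁int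
  have hzero₁ : (∫ x in (0:ℝ)..T, F₁ x * F₁ x) = 0 := by
    have expand : (∫ x in (0:ℝ)..T, F₁ x * F₁ x) =
        ((∫ x in (0:ℝ)..T, GN t x * F₁ x) + ∫ x in (0:ℝ)..T, GD t x * F₁ x)
          - ∫ x in (0:ℝ)..T, (2:ℝ) * (GP t x * F₁ x) := by
      rw [← integral_add i1 i2, ← integral_sub (i1.add i2) (i3.const_mul 2)]
      exact intervalIntegral.integral_congr (fun x _ => by simp only [hF₁def]; ring)
    rw [expand, intervalIntegral.integral_const_mul, hkey₁.1]; ring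
  have hF₁zero := fund_lemma hT hF₁c hzero₁ s hs
  -- second identity
  set F₂ : ℝ → ℝ := fun s => GN t s - GD t s - 2 * GP (2*T - t) s with hF₂def
  have hF₂c : ContinuousOn F₂ (Icc (0:ℝ) T) :=
    ((hgN.sub hgD).sub (hgP'.const_smul (2:ℝ)))
  have hF₂int : IntervalIntegrable F₂ volume 0 T :=
    (hF₂c.mono (by rw [uIcc_of_le hT.le])).intervalIntegrable
  have j1 : IntervalIntegrable (fun s => GN t s * F₂ s) volume 0 T :=
    ((hgN.mul hF₂c).mono (by rw [uIcc_of_le hT.le])).intervalIntegrable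
  have j2 : IntervalIntegrable (fun s => GD t s * F₂ s) volume 0 T :=
    ((hgD.mul hF₂c).mono (by rw [uIcc_of_le hT.le])).intervalIntegrable
  have j3 : IntervalIntegrable (fun s => GP (2*T - t) s * F₂ s) volume 0 T :=
    ((hgP'.mul hF₂c).mono (by rw [uIcc_of_le hT.le])).intervalIntegrable
  have hkey₂ := key_identities T hT a GN GD GP ha hcP hGN hGD hGP t ht F₂ hF₂int
  have hzero₂ : (∫ x in (0:ℝ)..T, F₂ x * F₂ x) = 0 := by
    have expand : (∫ x in (0:ℝ)..T, F₂ x * F₂ x) =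
        ((∫ x in (0:ℝ)..T, GN t x * F₂ x) - ∫ x in (0:ℝ)..T, GD t x * F₂ x)
          - ∫ x in (0:ℝ)..T, (2:ℝ) * (GP (2*T - t) x * F₂ x) := by
      rw [← integral_sub j1 j2, ← integral_sub (j1.sub j2) (j3.const_mul 2)]
      exact intervalIntegral.integral_congr (fun x _ => by simp only [hF₂def]; ring)
    rw [expand, intervalIntegral.integral_const_mul, hkey₂.2]; ring
  have hF₂zero := fund_lemma hT hF₂c hzero₂ s hs
  constructor
  · have : GN t s + GD t s - 2 * GP t s = 0 := hF₁zero
    linarith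
  · have : GN t s - GD t s - 2 * GP (2*T - t) s = 0 := hF₂zero
    linarith

/-- `G_N + G_D = 2 G_P` and `G_N − G_D = 2 G_P(2T−·,·)` on `[0,T]²`. -/
theorem statement7 (T : ℝ) (hT : 0 < T) (a : ℝ → ℝ) (GN GD GP : ℝ → ℝ → ℝ)
    (ha : IntervalIntegrable a volume 0 T)
    (hcN : ContinuousOn (fun p : ℝ × ℝ => GN p.1 p.2) (Icc (0:ℝ) T ×ˢ Icc (0:ℝ) T))
    (hcD : ContinuousOn (fun p : ℝ × ℝ => GD p.1 p.2) (Icc (0:ℝ) T ×ˢ Icc (0:ℝ) T))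
    (hcP : ContinuousOn (fun p : ℝ × ℝ => GP p.1 p.2)
      (Icc (0:ℝ) (2 * T) ×ˢ Icc (0:ℝ) (2 * T)))
    (hGN : IsGreen a T (NeumannBC T) GN)
    (hGD : IsGreen a T (DirichletBC T) GD)
    (hGP : IsGreen (evenExt T a) (2 * T) (PeriodicBC (2 * T)) GP) :
    ∀ t ∈ Icc (0:ℝ) T, ∀ s ∈ Icc (0:ℝ) T,
      GN t s + GD t s = 2 * GP t s ∧
      GN t s - GD t s = 2 * GP (2 * T - t) s := by
  exact statement7' T hT a GN GD GP ha hcN hcD hcP hGN hGD hGP
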